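/- For all 0 < ε < s, ∫_{ε}^{s} (1/t) [ ∫_{ℝⁿ} 1{x₁ + ⋯ + xₙ ≤ t} (⟨x, ∇f(x)⟩ + n·f(x)) dx ] dt = μ({x ∈ ℝⁿ : x₁ + ⋯ + xₙ ≤ s}) − μ({x ∈ ℝⁿ : x₁ + ⋯ + xₙ ≤ ε}). (This is the integrated form of the density representation, obtained by the Fubini–Tonelli theorem.) -/

import Mathlib

open MeasureTheory

section Aux

variable (n : ℕ)

/-- auxiliary set -/
def auxS (t : ℝ) : Set (EuclideanSpace ℝ (Fin n)) := {y | ∑ i, y i ≤ t}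

/-- auxiliary integrand -/
noncomputable def auxg (f : EuclideanSpace ℝ (Fin n) → ℝ) :
    EuclideanSpace ℝ (Fin n) → ℝ :=
  fun x => (inner ℝ x (gradient f x) : ℝ) + n * f x

/-- auxiliary derivative function -/
noncomputable def auxD (f : EuclideanSpace ℝ (Fin n) → ℝ) (t : ℝ)
    (y : EuclideanSpace ℝ (Fin n)) : ℝ :=
  t ^ (n - 1) * auxg n f (t • y)

lemma auxS_meas (t : ℝ) : MeasurableSet (auxS n t) := by
  have hsum : Continuous (fun y : EuclideanSpace ℝ (Fin n) => ∑ i, y i) :=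
    continuous_finset_sum _ (fun i _ => (EuclideanSpace.proj i).continuous)
  exact hsum.measurable measurableSet_Iic

lemma auxS_smul_mem {t : ℝ} (ht : 0 < t) (y : EuclideanSpace ℝ (Fin n)) :
    t • y ∈ auxS n t ↔ y ∈ auxS n 1 := by
  have h : ∑ i, (t • y) i = t * ∑ i, y i := by
    simp [Finset.mul_sum]
  simp only [auxS, Set.mem_setOf_eq, h]
  constructor
  · intro h'; nlinarith
  · intro h'; nlinarith

lemma aux_indicator_smul (h : EuclideanSpace ℝ (Fin n) → ℝ) {t : ℝ} (ht : 0 < t)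
    (y : EuclideanSpace ℝ (Fin n)) :
    (auxS n t).indicator h (t • y) = (auxS n 1).indicator (fun y => h (t • y)) y := by
  by_cases hy : y ∈ auxS n 1
  · rw [Set.indicator_of_mem hy, Set.indicator_of_mem ((auxS_smul_mem n ht y).2 hy)]
  · rw [Set.indicator_of_notMem hy,
      Set.indicator_of_notMem (fun hc => hy ((auxS_smul_mem n ht y).1 hc))]

lemma aux_scale (h : EuclideanSpace ℝ (Fin n) → ℝ) {t : ℝ} (ht : 0 < t) :
    ∫ y, h (t • y) = (t ^ n)⁻¹ * ∫ x, h x := by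
  rw [MeasureTheory.Measure.integral_comp_smul volume h t, finrank_euclideanSpace_fin,
    smul_eq_mul, abs_of_pos (inv_pos.2 (pow_pos ht n))]

end Aux

/-- Let `f` be a continuously differentiable probability density on `ℝⁿ`
(`n ≥ 1`) with `∫ |⟨x, ∇f(x)⟩| dx < ∞`, and `μ` the law of `X ∼ f`.  For all `0 < ε < s`,
`∫_ε^s (1/t) [∫ 1{x₁+⋯+xₙ ≤ t} (⟨x, ∇f(x)⟩ + n f(x)) dx] dt
  = μ{∑xᵢ ≤ s} − μ{∑xᵢ ≤ ε}`. -/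
theorem integrated_density_representation
    (n : ℕ) (hn : 1 ≤ n)
    (f : EuclideanSpace ℝ (Fin n) → ℝ)
    (hf_nonneg : ∀ x, 0 ≤ f x)
    (hf_diff : ContDiff ℝ 1 f)
    (hf_prob : ∫ x, f x = 1)
    (hf_int : Integrable (fun x : EuclideanSpace ℝ (Fin n) => (inner ℝ x (gradient f x) : ℝ)))
    (μ : Measure (EuclideanSpace ℝ (Fin n)))
    (hμ : μ = volume.withDensity (fun x => ENNReal.ofReal (f x))) :
    ∀ ε s : ℝ, 0 < ε → ε < s →
      (∫ t in Set.Ioc ε s, (1 / t) * ∫ x : EuclideanSpace ℝ (Fin n),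
          Set.indicator {y : EuclideanSpace ℝ (Fin n) | ∑ i, y i ≤ t}
            (fun y => (inner ℝ y (gradient f y) : ℝ) + n * f y) x)
        = (μ {x | ∑ i, x i ≤ s}).toReal - (μ {x | ∑ i, x i ≤ ε}).toReal := by
  intro ε s hε hεs
  have hs : (0:ℝ) < s := hε.trans hεs
  have hf_cont : Continuous f := hf_diff.continuous
  have hf_int' : Integrable f := by
    by_contra h; rw [integral_undef h] at hf_prob; norm_num at hf_prob
  have hgrad_cont : Continuous (fun x => gradient f x) := by
    unfold gradient
    exact (LinearIsometryEquiv.continuous _).comp (hf_diff.continuous_fderiv one_ne_zero)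
  have hg_cont : Continuous (auxg n f) :=
    (continuous_id.inner hgrad_cont).add (continuous_const.mul hf_cont)
  have hg_int : Integrable (auxg n f) := hf_int.add (hf_int'.const_mul n)
  -- measure representation
  have hμrep : ∀ t : ℝ, (μ (auxS n t)).toReal = ∫ x, (auxS n t).indicator f x := by
    intro t
    rw [hμ, withDensity_apply _ (auxS_meas n t), integral_indicator (auxS_meas n t),
      ← ofReal_integral_eq_lintegral_ofReal hf_int'.integrableOn (ae_of_all _ hf_nonneg),
      ENNReal.toReal_ofReal (setIntegral_nonneg (auxS_meas n t) (fun x _ => hf_nonneg x))]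
  -- scaling of the distribution function
  have hpow : ∀ {t : ℝ}, t ≠ 0 → t ^ n = t ^ (n - 1) * t := by
    intro t ht
    rw [← pow_succ]; congr 1; omega
  have hFscale : ∀ {t : ℝ}, 0 < t →
      ∫ x, (auxS n t).indicator f x
        = t ^ n * ∫ y, (auxS n 1).indicator (fun y => f (t • y)) y := by
    intro t ht
    have htn : (t : ℝ) ^ n ≠ 0 := pow_ne_zero _ ht.ne'
    have h1 := aux_scale n ((auxS n t).indicator f) ht
    calc ∫ x, (auxS n t).indicator f x
        = t ^ n * ((t ^ n)⁻¹ * ∫ x, (auxS n t).indicator f x) := by field_simp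
      _ = t ^ n * ∫ y, (auxS n t).indicator f (t • y) := by rw [h1]
      _ = t ^ n * ∫ y, (auxS n 1).indicator (fun y => f (t • y)) y := by
          congr 1
          exact integral_congr_ae (ae_of_all _ fun y => aux_indicator_smul n f ht y)
  -- per-t identity
  have hpert : ∀ {t : ℝ}, 0 < t →
      (1 / t) * (∫ x, (auxS n t).indicator (auxg n f) x)
        = ∫ y, (auxS n 1).indicator (auxD n f t) y := by
    intro t ht
    have htn : (t : ℝ) ^ n ≠ 0 := pow_ne_zero _ ht.ne'
    have h1 := aux_scale n ((auxS n t).indicator (auxg n f)) ht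
    calc (1 / t) * ∫ x, (auxS n t).indicator (auxg n f) x
        = t ^ (n - 1) * ((t ^ n)⁻¹ * ∫ x, (auxS n t).indicator (auxg n f) x) := by
          rw [hpow ht.ne']; field_simp
      _ = t ^ (n - 1) * ∫ y, (auxS n t).indicator (auxg n f) (t • y) := by rw [h1]
      _ = t ^ (n - 1) * ∫ y, (auxS n 1).indicator (fun y => auxg n f (t • y)) y := by
          congr 1
          exact integral_congr_ae (ae_of_all _ fun y => aux_indicator_smul n (auxg n f) ht y)
      _ = ∫ y, t ^ (n - 1) * (auxS n 1).indicator (fun y => auxg n f (t • y)) y := by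
          rw [integral_const_mul]
      _ = ∫ y, (auxS n 1).indicator (auxD n f t) y := by
          refine integral_congr_ae (ae_of_all _ fun y => ?_)
          by_cases hy : y ∈ auxS n 1 <;>
            simp [auxD, Set.indicator_of_mem, Set.indicator_of_notMem, hy]
  -- FTC per y
  have hFTC : ∀ y : EuclideanSpace ℝ (Fin n),
      (∫ t in Set.Ioc ε s, auxD n f t y)
        = s ^ n * f (s • y) - ε ^ n * f (ε • y) := by
    intro y
    rw [← intervalIntegral.integral_of_le hεs.le]
    have hderiv : ∀ t ∈ Set.uIcc ε s,
        HasDerivAt (fun t : ℝ => t ^ n * f (t • y)) (auxD n f t y) t := by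
      intro t htmem
      rw [Set.uIcc_of_le hεs.le] at htmem
      have ht : 0 < t := lt_of_lt_of_le hε htmem.1
      have hc : HasDerivAt (fun t : ℝ => t • y) y t := by
        simpa using (hasDerivAt_id t).smul_const y
      have h2 : HasDerivAt (fun t : ℝ => f (t • y))
          (inner ℝ (gradient f (t • y)) y : ℝ) t := by
        have h := (((hf_diff.differentiable one_ne_zero) (t • y)).hasGradientAt.hasFDerivAt).comp_hasDerivAt t hc
        exact h
      have h3 := (hasDerivAt_pow n t).mul h2
      refine h3.congr_deriv (Eq.symm ?_)
      have hin : (inner ℝ (t • y) (gradient f (t • y)) : ℝ)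
          = t * (inner ℝ (gradient f (t • y)) y : ℝ) := by
        rw [real_inner_smul_left, real_inner_comm]
      have hp : t ^ (n - 1) * t = t ^ n := by rw [← pow_succ]; congr 1; omega
      simp only [auxD, auxg, hin]
      push_cast
      linear_combination (inner ℝ (gradient f (t • y)) y : ℝ) * hp
    have hcont : Continuous (fun t : ℝ => auxD n f t y) :=
      (continuous_pow (n - 1)).mul (hg_cont.comp (continuous_id.smul continuous_const))
    exact intervalIntegral.integral_eq_sub_of_hasDerivAt hderiv (hcont.intervalIntegrable ε s)
  -- Fubini: joint measurability
  have hΨm : AEStronglyMeasurable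
      (fun p : ℝ × EuclideanSpace ℝ (Fin n) => (auxS n 1).indicator (auxD n f p.1) p.2)
      ((volume.restrict (Set.Ioc ε s)).prod volume) := by
    have heq : (fun p : ℝ × EuclideanSpace ℝ (Fin n) =>
          (auxS n 1).indicator (auxD n f p.1) p.2)
        = fun p => (auxS n 1).indicator (fun _ => (1:ℝ)) p.2
            * (p.1 ^ (n - 1) * auxg n f (p.1 • p.2)) := by
      funext p
      by_cases hp : p.2 ∈ auxS n 1 <;>
        simp [auxD, Set.indicator_of_mem, Set.indicator_of_notMem, hp]
    rw [heq]
    exact ((((measurable_const.indicator (auxS_meas n 1)).comp measurable_snd)).mul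
      (((continuous_fst.pow _).mul
        (hg_cont.comp (continuous_fst.smul continuous_snd))).measurable)).aestronglyMeasurable
  -- norm bound
  have hC : (0:ℝ) ≤ ∫ x, ‖auxg n f x‖ := integral_nonneg fun x => norm_nonneg _
  have hnormint : ∀ {t : ℝ}, 0 < t →
      (∫ y, ‖(auxS n 1).indicator (auxD n f t) y‖) ≤ (1 / t) * ∫ x, ‖auxg n f x‖ := by
    intro t ht
    have hDint : Integrable (fun y => ‖auxD n f t y‖) :=
      ((hg_int.comp_smul ht.ne').const_mul (t ^ (n - 1))).norm
    have h1 : (∫ y, ‖(auxS n 1).indicator (auxD n f t) y‖) ≤ ∫ y, ‖auxD n f t y‖ := by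
      refine integral_mono_of_nonneg (ae_of_all _ fun y => norm_nonneg _) hDint
        (ae_of_all _ fun y => ?_)
      exact norm_indicator_le_norm_self _ _
    refine h1.trans (le_of_eq ?_)
    have h2 : (fun y => ‖auxD n f t y‖)
        = fun y => t ^ (n - 1) * (fun x => ‖auxg n f x‖) (t • y) := by
      funext y
      simp only [auxD, norm_mul, Real.norm_eq_abs]
      rw [abs_of_pos (pow_pos ht _)]
    rw [h2, integral_const_mul, aux_scale n (fun x => ‖auxg n f x‖) ht, hpow ht.ne']
    field_simp
  -- joint integrability
  have hΨint : Integrable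
      (fun p : ℝ × EuclideanSpace ℝ (Fin n) => (auxS n 1).indicator (auxD n f p.1) p.2)
      ((volume.restrict (Set.Ioc ε s)).prod volume) := by
    refine (integrable_prod_iff hΨm).2 ⟨?_, ?_⟩
    · filter_upwards [ae_restrict_mem measurableSet_Ioc] with t htmem
      have ht : 0 < t := hε.trans htmem.1
      exact ((hg_int.comp_smul ht.ne').const_mul (t ^ (n - 1))).indicator (auxS_meas n 1)
    · refine Integrable.mono' (integrable_const ((1 / ε) * ∫ x, ‖auxg n f x‖))
        (hΨm.norm.integral_prod_right') ?_
      filter_upwards [ae_restrict_mem measurableSet_Ioc] with t htmem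
      have ht : 0 < t := hε.trans htmem.1
      have h0 : (0:ℝ) ≤ ∫ y, ‖(auxS n 1).indicator (auxD n f t) y‖ :=
        integral_nonneg fun y => norm_nonneg _
      rw [Real.norm_eq_abs, abs_of_nonneg h0]
      refine (hnormint ht).trans ?_
      exact mul_le_mul_of_nonneg_right
        (one_div_le_one_div_of_le hε htmem.1.le) hC
  -- put everything together
  have hswap := integral_integral_swap
    (f := fun t y => (auxS n 1).indicator (auxD n f t) y) hΨint
  have key : (∫ t in Set.Ioc ε s, (1 / t) * ∫ x, (auxS n t).indicator (auxg n f) x)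
      = (μ (auxS n s)).toReal - (μ (auxS n ε)).toReal := by
    have hsint : Integrable (fun y => (auxS n 1).indicator (fun y => f (s • y)) y) :=
      (hf_int'.comp_smul hs.ne').indicator (auxS_meas n 1)
    have hεint : Integrable (fun y => (auxS n 1).indicator (fun y => f (ε • y)) y) :=
      (hf_int'.comp_smul hε.ne').indicator (auxS_meas n 1)
    calc (∫ t in Set.Ioc ε s, (1 / t) * ∫ x, (auxS n t).indicator (auxg n f) x)
        = ∫ t in Set.Ioc ε s, ∫ y, (auxS n 1).indicator (auxD n f t) y := by
          refine setIntegral_congr_fun measurableSet_Ioc fun t htmem => ?_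
          exact hpert (hε.trans htmem.1)
      _ = ∫ y, ∫ t in Set.Ioc ε s, (auxS n 1).indicator (auxD n f t) y := hswap
      _ = ∫ y, (auxS n 1).indicator
            (fun y => s ^ n * f (s • y) - ε ^ n * f (ε • y)) y := by
          refine integral_congr_ae (ae_of_all _ fun y => ?_)
          by_cases hy : y ∈ auxS n 1
          · rw [Set.indicator_of_mem hy]
            have h : ∀ t : ℝ, (auxS n 1).indicator (auxD n f t) y = auxD n f t y :=
              fun t => Set.indicator_of_mem hy _
            simp_rw [h]
            exact hFTC y
          · rw [Set.indicator_of_notMem hy]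
            have h : ∀ t : ℝ, (auxS n 1).indicator (auxD n f t) y = 0 :=
              fun t => Set.indicator_of_notMem hy _
            simp_rw [h, integral_zero]
      _ = (∫ y, s ^ n * (auxS n 1).indicator (fun y => f (s • y)) y)
            - ∫ y, ε ^ n * (auxS n 1).indicator (fun y => f (ε • y)) y := by
          rw [← integral_sub (hsint.const_mul _) (hεint.const_mul _)]
          refine integral_congr_ae (ae_of_all _ fun y => ?_)
          by_cases hy : y ∈ auxS n 1 <;>
            simp [Set.indicator_of_mem, Set.indicator_of_notMem, hy]
      _ = (μ (auxS n s)).toReal - (μ (auxS n ε)).toReal := by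
          rw [integral_const_mul, integral_const_mul, hμrep s, hμrep ε,
            hFscale hs, hFscale hε]
  exact key
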